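/- Let q ≥ 2, r* = q³−q, u* = q³+q². Define Ω' = {(i, j₁,…,j_{q−1}, k₁,…,k_{q−1}) ∈ ℤ^{2q−1} : −r* ≤ i; 0 ≤ i + (q²+q)k_μ < q²+q for all μ; 0 ≤ qi + (q²+q)j_ν − (q+1)Σ_μ k_μ < q²+q for all ν; −u* ≤ −q²i − (q²+q)Σ_ν j_ν − (q+1)Σ_μ k_μ}. Then the constraints force k₁ = ⋯ = k_{q−1} and j₁ = ⋯ = j_{q−1}, and via the substitution j' = j − k this set is in bijection with Ω_{r*,0,0,u*} = {(i,j',k) ∈ ℤ³ : −r* ≤ i, 0 ≤ i + (q²+q)k < q²+q, 0 ≤ qi + (q²+q)j' + (q+1)k < q²+q, −u* ≤ −q²i − (q³−q)j' − (q³+q²−q−1)k}; consequently #Ω' = q + u*. -/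

import Mathlib

/-- The three-dimensional lattice point set Ω_{r,s,t,u}. -/
def Omega (q r s t u : ℤ) : Set (ℤ × ℤ × ℤ) :=
  {p | -r ≤ p.1 ∧
       -s ≤ p.1 + (q ^ 2 + q) * p.2.2 ∧
       p.1 + (q ^ 2 + q) * p.2.2 < -s + (q ^ 2 + q) ∧
       -t ≤ q * p.1 + (q ^ 2 + q) * p.2.1 + (q + 1) * p.2.2 ∧
       q * p.1 + (q ^ 2 + q) * p.2.1 + (q + 1) * p.2.2 < -t + (q ^ 2 + q) ∧
       -u ≤ -q ^ 2 * p.1 - (q ^ 3 - q) * p.2.1 - (q ^ 3 + q ^ 2 - q - 1) * p.2.2}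

/-- The (2q−1)-dimensional lattice point set Ω' with all parameters
    s_μ = t_ν = 0, r* = q³−q, u* = q³+q², where q = n+1. -/
def Omega' (q : ℤ) (n : ℕ) : Set (ℤ × (Fin n → ℤ) × (Fin n → ℤ)) :=
  {p | -(q ^ 3 - q) ≤ p.1 ∧
       (∀ μ : Fin n, 0 ≤ p.1 + (q ^ 2 + q) * p.2.2 μ ∧
          p.1 + (q ^ 2 + q) * p.2.2 μ < q ^ 2 + q) ∧
       (∀ ν : Fin n,
          0 ≤ q * p.1 + (q ^ 2 + q) * p.2.1 ν - (q + 1) * ∑ μ, p.2.2 μ ∧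
          q * p.1 + (q ^ 2 + q) * p.2.1 ν - (q + 1) * ∑ μ, p.2.2 μ < q ^ 2 + q) ∧
       -(q ^ 3 + q ^ 2)
         ≤ -q ^ 2 * p.1 - (q ^ 2 + q) * ∑ ν, p.2.1 ν - (q + 1) * ∑ μ, p.2.2 μ}

def Wf (q d y : ℤ) : ℤ :=
  if q * y - (q + 1) * d < 0 then 1 else if q * y - (q + 1) * d < q ^ 2 + q then 0 else -1

def Df (q x y : ℤ) : ℤ :=
  if x = 0 ∧ y = 0 then q else if q < x + y then y - q - 1 else if y ≤ 0 then 0 else y - 1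

lemma Df_le (q x y : ℤ) (hq : 2 ≤ q) (hy1 : y ≤ q) : Df q x y ≤ q := by
  unfold Df; split_ifs <;> omega

lemma unique_shift {m c k k' : ℤ} (hm : 0 < m) (h1 : 0 ≤ c + m * k) (h2 : c + m * k < m)
    (h3 : 0 ≤ c + m * k') (h4 : c + m * k' < m) : k = k' := by
  rcases lt_trichotomy k k' with h | h | h
  · have h5 : m * (k + 1) ≤ m * k' := mul_le_mul_of_nonneg_left (by omega) hm.le
    nlinarith
  · exact h
  · have h5 : m * (k' + 1) ≤ m * k := mul_le_mul_of_nonneg_left (by omega) hm.le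
    nlinarith

lemma Wf_spec (q d y : ℤ) (hq : 2 ≤ q) (hy0 : 0 ≤ y) (hy1 : y ≤ q) (hd0 : -(q - 1) ≤ d)
    (hd1 : d ≤ q) :
    0 ≤ q * y - (q + 1) * d + (q ^ 2 + q) * Wf q d y ∧
      q * y - (q + 1) * d + (q ^ 2 + q) * Wf q d y < q ^ 2 + q := by
  have hqy : 0 ≤ q * y := mul_nonneg (by omega) hy0
  have hqy2 : q * y ≤ q * q := mul_le_mul_of_nonneg_left hy1 (by omega)
  have hdl : (q + 1) * (-(q - 1)) ≤ (q + 1) * d := mul_le_mul_of_nonneg_left hd0 (by omega)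
  have hdu : (q + 1) * d ≤ (q + 1) * q := mul_le_mul_of_nonneg_left hd1 (by omega)
  unfold Wf
  split_ifs with h1 h2 <;> constructor <;> nlinarith

set_option maxHeartbeats 1000000 in
lemma star_of (q d x y w : ℤ) (hq : 2 ≤ q) (hx0 : 0 ≤ x) (hx1 : x ≤ q - 1) (hy0 : 0 ≤ y)
    (hy1 : y ≤ q) (hd0 : -(q - 1) ≤ d)
    (hw0 : 0 ≤ q * y - (q + 1) * d + (q ^ 2 + q) * w)
    (hw1 : q * y - (q + 1) * d + (q ^ 2 + q) * w < q ^ 2 + q)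
    (hdD : d ≤ Df q x y) :
    q * (q + 1) * x + q ^ 2 * y + (q + 1) * d + (q - 1) * (q ^ 2 + q) * w ≤ q ^ 3 + q ^ 2 := by
  have hqq : (0:ℤ) < q * (q + 1) := by nlinarith
  have hqy : 0 ≤ q * y := mul_nonneg (by omega) hy0
  have hqy2 : q * y ≤ q * q := mul_le_mul_of_nonneg_left hy1 (by omega)
  have hx' : q * (q + 1) * x ≤ q * (q + 1) * (q - 1) := mul_le_mul_of_nonneg_left hx1 hqq.le
  have hqx : 0 ≤ q * (q + 1) * x := mul_nonneg hqq.le hx0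
  have hy2 : q ^ 2 * y ≤ q ^ 2 * q := mul_le_mul_of_nonneg_left hy1 (by positivity)
  have hy2' : 0 ≤ q ^ 2 * y := mul_nonneg (by positivity) hy0
  have hdd := mul_le_mul_of_nonneg_left hdD (by omega : (0:ℤ) ≤ q + 1)
  have hdl : (q + 1) * (-(q - 1)) ≤ (q + 1) * d := mul_le_mul_of_nonneg_left hd0 (by omega)
  have hd1 : d ≤ q := le_trans hdD (Df_le q x y hq hy1)
  have hdu : (q + 1) * d ≤ (q + 1) * q := mul_le_mul_of_nonneg_left hd1 (by omega)
  have hwu : w ≤ 1 := by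
    by_contra hcon
    push_neg at hcon
    have h2w : (q ^ 2 + q) * 2 ≤ (q ^ 2 + q) * w :=
      mul_le_mul_of_nonneg_left (by omega) (by nlinarith)
    linarith
  have hwl : -1 ≤ w := by
    by_contra hcon
    push_neg at hcon
    have h2w : (q ^ 2 + q) * w ≤ (q ^ 2 + q) * (-2) :=
      mul_le_mul_of_nonneg_left (by omega) (by nlinarith)
    linarith
  unfold Df at hdD hdd
  interval_cases w
  · -- w = -1
    linarith
  · -- w = 0
    split_ifs at hdD hdd with hc1 hc2 hc3
    · obtain ⟨hx_, hy_⟩ := hc1; subst hx_; subst hy_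
      have : (0:ℤ) ≤ q ^ 3 + q ^ 2 := by positivity
      linarith
    · linarith
    · have hy3 : q ^ 2 * y ≤ 0 := mul_nonpos_of_nonneg_of_nonpos (by positivity) hc3
      have hy4 : q * y ≤ 0 := mul_nonpos_of_nonneg_of_nonpos (by omega) hc3
      linarith
    · have hxq : q * (q + 1) * x ≤ q * (q + 1) * (q - y) :=
        mul_le_mul_of_nonneg_left (by omega) hqq.le
      linarith
  · -- w = 1
    split_ifs at hdD hdd with hc1 hc2 hc3
    · obtain ⟨hx_, hy_⟩ := hc1; subst hx_; subst hy_; linarith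
    · linarith
    · have hy4 : q * y ≤ 0 := mul_nonpos_of_nonneg_of_nonpos (by omega) hc3
      linarith
    · linarith

set_option maxHeartbeats 1000000 in
lemma le_Df_of_star (q d x y w : ℤ) (hq : 2 ≤ q) (hx0 : 0 ≤ x) (hx1 : x ≤ q - 1) (hy0 : 0 ≤ y)
    (hy1 : y ≤ q) (hd0 : -(q - 1) ≤ d)
    (hw0 : 0 ≤ q * y - (q + 1) * d + (q ^ 2 + q) * w)
    (hw1 : q * y - (q + 1) * d + (q ^ 2 + q) * w < q ^ 2 + q)
    (hstar : q * (q + 1) * x + q ^ 2 * y + (q + 1) * d + (q - 1) * (q ^ 2 + q) * w ≤ q ^ 3 + q ^ 2) :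
    d ≤ Df q x y := by
  have hqq : (0:ℤ) < q * (q + 1) := by nlinarith
  have hqy : 0 ≤ q * y := mul_nonneg (by omega) hy0
  have hqy2 : q * y ≤ q * q := mul_le_mul_of_nonneg_left hy1 (by omega)
  have hqx : 0 ≤ q * (q + 1) * x := mul_nonneg hqq.le hx0
  have hy2' : 0 ≤ q ^ 2 * y := mul_nonneg (by positivity) hy0
  have hdl : (q + 1) * (-(q - 1)) ≤ (q + 1) * d := mul_le_mul_of_nonneg_left hd0 (by omega)
  have hwu : w ≤ 1 := by
    by_contra hcon
    push_neg at hcon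
    have h2w : (q ^ 3 + q ^ 2) * 2 ≤ (q ^ 3 + q ^ 2) * w :=
      mul_le_mul_of_nonneg_left (by omega) (by positivity)
    nlinarith
  have hwl : -1 ≤ w := by
    by_contra hcon
    push_neg at hcon
    have h2w : (q ^ 2 + q) * w ≤ (q ^ 2 + q) * (-2) :=
      mul_le_mul_of_nonneg_left (by omega) (by nlinarith)
    linarith
  interval_cases w <;> unfold Df <;> split_ifs with hc1 hc2 hc3
  -- w = -1
  · obtain ⟨hx_, hy_⟩ := hc1; subst hx_; subst hy_
    by_contra hcon; push_neg at hcon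
    have h := mul_le_mul_of_nonneg_left (by omega : q + 1 ≤ d) (by omega : (0:ℤ) ≤ q + 1)
    nlinarith
  · by_contra hcon; push_neg at hcon
    have h := mul_le_mul_of_nonneg_left (by omega : y - q ≤ d) (by omega : (0:ℤ) ≤ q + 1)
    nlinarith
  · by_contra hcon; push_neg at hcon
    have h := mul_le_mul_of_nonneg_left (by omega : 1 ≤ d) (by omega : (0:ℤ) ≤ q + 1)
    have hy4 : q * y ≤ 0 := mul_nonpos_of_nonneg_of_nonpos (by omega) hc3
    nlinarith
  · by_contra hcon; push_neg at hcon
    have h := mul_le_mul_of_nonneg_left (by omega : y ≤ d) (by omega : (0:ℤ) ≤ q + 1)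
    nlinarith
  -- w = 0
  · obtain ⟨hx_, hy_⟩ := hc1; subst hx_; subst hy_
    by_contra hcon; push_neg at hcon
    have h := mul_le_mul_of_nonneg_left (by omega : q + 1 ≤ d) (by omega : (0:ℤ) ≤ q + 1)
    nlinarith
  · by_contra hcon; push_neg at hcon
    have h1 : q * (q + 1) * (q + 1 - y) ≤ q * (q + 1) * x :=
      mul_le_mul_of_nonneg_left (by omega) hqq.le
    have h2 := mul_le_mul_of_nonneg_left (by omega : y - q ≤ d) (by omega : (0:ℤ) ≤ q + 1)
    nlinarith
  · by_contra hcon; push_neg at hcon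
    have h := mul_le_mul_of_nonneg_left (by omega : 1 ≤ d) (by omega : (0:ℤ) ≤ q + 1)
    have hy4 : q * y ≤ 0 := mul_nonpos_of_nonneg_of_nonpos (by omega) hc3
    nlinarith
  · by_contra hcon; push_neg at hcon
    have h := mul_le_mul_of_nonneg_left (by omega : y ≤ d) (by omega : (0:ℤ) ≤ q + 1)
    nlinarith
  -- w = 1
  · obtain ⟨hx_, hy_⟩ := hc1; subst hx_; subst hy_
    by_contra hcon; push_neg at hcon
    have h := mul_le_mul_of_nonneg_left (by omega : q + 1 ≤ d) (by omega : (0:ℤ) ≤ q + 1)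
    nlinarith
  · have hyge : 2 ≤ y := by omega
    have hY2 : q ^ 2 * 2 ≤ q ^ 2 * y := mul_le_mul_of_nonneg_left hyge (by positivity)
    have hY : q * 2 ≤ q * y := mul_le_mul_of_nonneg_left hyge (by omega)
    nlinarith
  · have hy_ : y = 0 := le_antisymm hc3 hy0
    subst hy_
    have hx_ : 1 ≤ x := by
      rcases lt_or_ge 0 x with h | h
      · omega
      · exact absurd (by omega : x = 0) (fun hx => hc1 ⟨hx, rfl⟩)
    have hd1 : 1 ≤ d := by
      by_contra h; push_neg at h
      have : (q + 1) * d ≤ 0 := mul_nonpos_of_nonneg_of_nonpos (by omega) (by omega)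
      nlinarith
    have hX : q * (q + 1) * 1 ≤ q * (q + 1) * x := mul_le_mul_of_nonneg_left hx_ hqq.le
    have hD := mul_le_mul_of_nonneg_left hd1 (by omega : (0:ℤ) ≤ q + 1)
    nlinarith
  · have hY2 : q ^ 2 * 1 ≤ q ^ 2 * y := mul_le_mul_of_nonneg_left (by omega) (by positivity)
    have hY : q * 1 ≤ q * y := mul_le_mul_of_nonneg_left (by omega) (by omega)
    nlinarith

def Gf (q d x y : ℤ) : ℤ × ℤ × ℤ :=
  ((q ^ 2 + q) * d + (q + 1) * x + y, -q * d - x + Wf q d y, -d)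

noncomputable def FU (q : ℤ) : Finset (ℤ × ℤ × ℤ) :=
  ((Finset.Icc (-(q - 1)) q) ×ˢ (Finset.Icc 0 (q - 1)) ×ˢ (Finset.Icc 0 q)).filter
    (fun p => p.1 ≤ Df q p.2.1 p.2.2)

lemma mem_FU (q : ℤ) (p : ℤ × ℤ × ℤ) :
    p ∈ FU q ↔ (-(q - 1) ≤ p.1 ∧ p.1 ≤ q) ∧ (0 ≤ p.2.1 ∧ p.2.1 ≤ q - 1) ∧
      (0 ≤ p.2.2 ∧ p.2.2 ≤ q) ∧ p.1 ≤ Df q p.2.1 p.2.2 := by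
  simp only [FU, Finset.mem_filter, Finset.mem_product, Finset.mem_Icc]
  tauto

lemma Gf_mem (q d x y : ℤ) (hq : 2 ≤ q) (hd0 : -(q - 1) ≤ d) (hdD : d ≤ Df q x y)
    (hx0 : 0 ≤ x) (hx1 : x ≤ q - 1) (hy0 : 0 ≤ y) (hy1 : y ≤ q) :
    Gf q d x y ∈ Omega q (q ^ 3 - q) 0 0 (q ^ 3 + q ^ 2) := by
  have hd1 : d ≤ q := le_trans hdD (Df_le q x y hq hy1)
  obtain ⟨hb0, hb1⟩ := Wf_spec q d y hq hy0 hy1 hd0 hd1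
  have hstar := star_of q d x y (Wf q d y) hq hx0 hx1 hy0 hy1 hd0 hb0 hb1 hdD
  have hxp : 0 ≤ (q + 1) * x := mul_nonneg (by omega) hx0
  have hxu : (q + 1) * x ≤ (q + 1) * (q - 1) := mul_le_mul_of_nonneg_left hx1 (by omega)
  have hmd : (q ^ 2 + q) * (-(q - 1)) ≤ (q ^ 2 + q) * d :=
    mul_le_mul_of_nonneg_left hd0 (by nlinarith)
  simp only [Omega, Gf, Set.mem_setOf_eq]
  refine ⟨by linarith, by linarith, by linarith, by linarith, by linarith, by linarith⟩

lemma Gf_injOn (q : ℤ) (hq : 2 ≤ q) :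
    Set.InjOn (fun p : ℤ × ℤ × ℤ => Gf q p.1 p.2.1 p.2.2) ↑(FU q) := by
  rintro ⟨d, x, y⟩ h1 ⟨d', x', y'⟩ h2 heq
  rw [Finset.mem_coe, mem_FU] at h1 h2
  simp only [Gf, Prod.mk.injEq] at heq
  obtain ⟨e1, e2, e3⟩ := heq
  have hd : d = d' := by omega
  subst hd
  have hxy : (q + 1) * x + y = (q + 1) * x' + y' := by linarith
  have hx : -x = -x' := by
    refine unique_shift (show (0:ℤ) < q + 1 by omega)
      (c := (q + 1) * x + y) ?_ ?_ ?_ ?_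
    · have := h1.2.2.1.1; linarith
    · have := h1.2.2.1.2; linarith
    · rw [hxy]; have := h2.2.2.1.1; linarith
    · rw [hxy]; have := h2.2.2.1.2; linarith
  have hx' : x = x' := by omega
  subst hx'
  have : y = y' := by linarith
  subst this
  rfl

lemma omega_eq (q : ℤ) (hq : 2 ≤ q) :
    Omega q (q ^ 3 - q) 0 0 (q ^ 3 + q ^ 2)
      = (fun p : ℤ × ℤ × ℤ => Gf q p.1 p.2.1 p.2.2) '' ↑(FU q) := by
  apply Set.Subset.antisymm
  · rintro ⟨i, j, k⟩ hmem
    simp only [Omega, Set.mem_setOf_eq] at hmem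
    obtain ⟨h1, h2, h3, h4, h5, h6⟩ := hmem
    set d := -k with hd
    have hk : k = -d := by omega
    set a := i + (q ^ 2 + q) * k with ha
    set x := a / (q + 1) with hxdef
    set y := a % (q + 1) with hydef
    have hq1 : (0:ℤ) < q + 1 := by omega
    have hy0 : 0 ≤ y := Int.emod_nonneg a (by omega)
    have hy1 : y ≤ q := by have := Int.emod_lt_of_pos a hq1; omega
    have hde : (q + 1) * x + y = a := Int.mul_ediv_add_emod a (q + 1)
    have ha0 : 0 ≤ a := by linarith
    have ha1 : a < q ^ 2 + q := by linarith
    have hx0 : 0 ≤ x := by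
      by_contra hcon; push_neg at hcon
      have : (q + 1) * x ≤ (q + 1) * (-1) := mul_le_mul_of_nonneg_left (by omega) (by omega)
      linarith
    have hx1 : x ≤ q - 1 := by
      by_contra hcon; push_neg at hcon
      have : (q + 1) * q ≤ (q + 1) * x := mul_le_mul_of_nonneg_left (by omega) (by omega)
      nlinarith
    have hi : i = (q ^ 2 + q) * d + (q + 1) * x + y := by
      have hmd : (q ^ 2 + q) * d = -((q ^ 2 + q) * k) := by rw [hd]; ring
      linarith
    have hd0 : -(q - 1) ≤ d := by
      by_contra hcon; push_neg at hcon
      have : (q ^ 2 + q) * d ≤ (q ^ 2 + q) * (-q) :=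
        mul_le_mul_of_nonneg_left (by omega) (by nlinarith)
      nlinarith
    set w := j + q * d + x with hwdef
    have hj : j = -q * d - x + w := by linarith
    have hbw : q * i + (q ^ 2 + q) * j + (q + 1) * k
        = q * y - (q + 1) * d + (q ^ 2 + q) * w := by
      linear_combination q * hi + (q ^ 2 + q) * hj + (q + 1) * hk
    have hw0 : 0 ≤ q * y - (q + 1) * d + (q ^ 2 + q) * w := by rw [← hbw]; linarith
    have hw1 : q * y - (q + 1) * d + (q ^ 2 + q) * w < q ^ 2 + q := by rw [← hbw]; linarith
    have hstar : q * (q + 1) * x + q ^ 2 * y + (q + 1) * d + (q - 1) * (q ^ 2 + q) * w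
        ≤ q ^ 3 + q ^ 2 := by
      have e : -q ^ 2 * i - (q ^ 3 - q) * j - (q ^ 3 + q ^ 2 - q - 1) * k
          = -(q * (q + 1) * x + q ^ 2 * y + (q + 1) * d + (q - 1) * (q ^ 2 + q) * w) := by
        linear_combination (-q ^ 2) * hi + (-(q ^ 3 - q)) * hj + (-(q ^ 3 + q ^ 2 - q - 1)) * hk
      linarith [e.le, e.ge]
    have hdD := le_Df_of_star q d x y w hq hx0 hx1 hy0 hy1 hd0 hw0 hw1 hstar
    have hd1 : d ≤ q := le_trans hdD (Df_le q x y hq hy1)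
    obtain ⟨hb0', hb1'⟩ := Wf_spec q d y hq hy0 hy1 hd0 hd1
    have hwW : w = Wf q d y :=
      unique_shift (show (0:ℤ) < q ^ 2 + q by nlinarith)
        (c := q * y - (q + 1) * d) hw0 hw1 hb0' hb1'
    refine ⟨(d, x, y), Finset.mem_coe.mpr ((mem_FU q _).mpr
      ⟨⟨hd0, hd1⟩, ⟨hx0, hx1⟩, ⟨hy0, hy1⟩, hdD⟩), ?_⟩
    show Gf q d x y = (i, j, k)
    unfold Gf
    refine Prod.ext hi.symm (Prod.ext ?_ ?_)
    · show -q * d - x + Wf q d y = j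
      rw [← hwW]; linarith
    · show -d = k
      omega
  · rintro p ⟨p', hp', rfl⟩
    rw [Finset.mem_coe, mem_FU] at hp'
    exact Gf_mem q p'.1 p'.2.1 p'.2.2 hq hp'.1.1 hp'.2.2.2 hp'.2.1.1 hp'.2.1.2
      hp'.2.2.1.1 hp'.2.2.1.2

noncomputable def FV (q : ℤ) : Finset (ℤ × ℤ × ℤ) :=
  ((Finset.Icc (1 - q) 0) ×ˢ (Finset.Icc 0 (q - 1)) ×ˢ (Finset.Icc 0 q)) ∪
    ((Finset.Icc 1 q) ×ˢ ({0} : Finset ℤ) ×ˢ ({0} : Finset ℤ))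

def Phi (q : ℤ) (p : ℤ × ℤ × ℤ) : ℤ × ℤ × ℤ :=
  if p.1 ≤ 0 then p else if p.2.1 = 0 ∧ p.2.2 = 0 then p
  else (p.1 - p.2.2 + 1, p.2.1 + p.2.2 - 1, q + 2 - p.2.2)

def Psi (q : ℤ) (p : ℤ × ℤ × ℤ) : ℤ × ℤ × ℤ :=
  if 1 ≤ p.1 then p
  else if q + 1 ≤ p.2.1 + p.2.2 ∧ p.2.2 - q ≤ p.1 then
    (p.1 + q + 1 - p.2.2, p.2.1 + p.2.2 - q - 1, q + 2 - p.2.2)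
  else p

lemma mem_FV (q : ℤ) (p : ℤ × ℤ × ℤ) :
    p ∈ FV q ↔ ((1 - q ≤ p.1 ∧ p.1 ≤ 0) ∧ (0 ≤ p.2.1 ∧ p.2.1 ≤ q - 1) ∧
      (0 ≤ p.2.2 ∧ p.2.2 ≤ q)) ∨ ((1 ≤ p.1 ∧ p.1 ≤ q) ∧ p.2.1 = 0 ∧ p.2.2 = 0) := by
  simp only [FV, Finset.mem_union, Finset.mem_product, Finset.mem_Icc, Finset.mem_singleton]
  try tauto

lemma card_FU (q : ℤ) (hq : 2 ≤ q) : ((FU q).card : ℤ) = q ^ 3 + q ^ 2 + q := by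
  have hbij : (FU q).card = (FV q).card := by
    apply Finset.card_bij' (fun p _ => Phi q p) (fun p _ => Psi q p)
    · rintro ⟨d, x, y⟩ hp
      rw [mem_FU] at hp
      rw [mem_FV]
      unfold Df at hp
      unfold Phi
      split_ifs at hp ⊢ <;> dsimp only at * <;> omega
    · rintro ⟨d, x, y⟩ hp
      rw [mem_FV] at hp
      rw [mem_FU]
      unfold Psi
      split_ifs <;> dsimp only <;> unfold Df <;> split_ifs <;> dsimp only at * <;> omega
    · rintro ⟨d, x, y⟩ hp
      rw [mem_FU] at hp
      unfold Df at hp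
      unfold Phi
      split_ifs at hp ⊢ <;> dsimp only at * <;>
        unfold Psi <;> split_ifs <;> dsimp only at * <;>
        simp only [Prod.mk.injEq] <;> omega
    · rintro ⟨d, x, y⟩ hp
      rw [mem_FV] at hp
      unfold Psi
      split_ifs <;> dsimp only at * <;>
        unfold Phi <;> split_ifs <;> dsimp only at * <;>
        simp only [Prod.mk.injEq] <;> omega
  have hdisj : Disjoint ((Finset.Icc (1 - q) 0) ×ˢ (Finset.Icc 0 (q - 1)) ×ˢ (Finset.Icc 0 q))
      ((Finset.Icc 1 q) ×ˢ ({0} : Finset ℤ) ×ˢ ({0} : Finset ℤ)) := by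
    rw [Finset.disjoint_left]
    intro p hp hp'
    simp only [Finset.mem_product, Finset.mem_Icc, Finset.mem_singleton] at hp hp'
    omega
  rw [hbij, FV, Finset.card_union_of_disjoint hdisj]
  simp only [Finset.card_product, Int.card_Icc, Finset.card_singleton]
  rw [show (0:ℤ) + 1 - (1 - q) = q by ring, show q - 1 + 1 - (0:ℤ) = q by ring,
    show q + 1 - (0:ℤ) = q + 1 by ring, show q + 1 - (1:ℤ) = q by ring]
  push_cast [Int.toNat_of_nonneg (by omega : (0:ℤ) ≤ q),
    Int.toNat_of_nonneg (by omega : (0:ℤ) ≤ q + 1)]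
  ring


lemma ncard_Omega (q : ℤ) (hq : 2 ≤ q) :
    (((Omega q (q ^ 3 - q) 0 0 (q ^ 3 + q ^ 2)).ncard : ℤ)) = q ^ 3 + q ^ 2 + q := by
  rw [omega_eq q hq, Set.ncard_image_of_injOn (Gf_injOn q hq), Set.ncard_coe_finset]
  exact card_FU q hq

/-- The constraints defining Ω' force all k_μ equal and all j_ν equal; the map
    (i, j, k) ↦ (i, j₁ − k₁, k₁) is a bijection from Ω' onto Ω_{q³−q,0,0,q³+q²};
    and consequently #Ω' = q + (q³+q²). -/
theorem stmt_18 (q : ℤ) (n : ℕ) (hq : 2 ≤ q) (hn : (q : ℤ) = n + 1)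
    (hn0 : 0 < n) :
    (∀ p ∈ Omega' q n, (∀ μ μ' : Fin n, p.2.2 μ = p.2.2 μ') ∧
        (∀ ν ν' : Fin n, p.2.1 ν = p.2.1 ν')) ∧
    Set.BijOn
      (fun p : ℤ × (Fin n → ℤ) × (Fin n → ℤ) =>
        (p.1, p.2.1 ⟨0, hn0⟩ - p.2.2 ⟨0, hn0⟩, p.2.2 ⟨0, hn0⟩))
      (Omega' q n) (Omega q (q ^ 3 - q) 0 0 (q ^ 3 + q ^ 2)) ∧
    ((Omega' q n).ncard : ℤ) = q + (q ^ 3 + q ^ 2) := by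
  have hm : (0:ℤ) < q ^ 2 + q := by nlinarith
  set idx : Fin n := ⟨0, hn0⟩ with hidx
  -- Part A
  have hA : ∀ p ∈ Omega' q n, (∀ μ μ' : Fin n, p.2.2 μ = p.2.2 μ') ∧
      (∀ ν ν' : Fin n, p.2.1 ν = p.2.1 ν') := by
    rintro ⟨i, J, K⟩ ⟨h1, h2, h3, h4⟩
    constructor
    · intro μ μ'
      exact unique_shift hm (c := i) (h2 μ).1 (h2 μ).2 (h2 μ').1 (h2 μ').2
    · intro ν ν'
      refine unique_shift hm (c := q * i - (q + 1) * ∑ μ, K μ) ?_ ?_ ?_ ?_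
      · have := (h3 ν).1; linarith
      · have := (h3 ν).2; linarith
      · have := (h3 ν').1; linarith
      · have := (h3 ν').2; linarith
  -- sum formulas
  have hsum : ∀ (F : Fin n → ℤ), (∀ μ μ' : Fin n, F μ = F μ') →
      ∑ μ, F μ = (q - 1) * F idx := by
    intro F hF
    have : ∑ μ, F μ = ∑ _μ : Fin n, F idx := Finset.sum_congr rfl (fun μ _ => hF μ idx)
    rw [this, Finset.sum_const, Finset.card_univ, Fintype.card_fin, nsmul_eq_mul]
    have : ((n : ℤ)) = q - 1 := by omega
    rw [this]
  -- Part B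
  have hB : Set.BijOn
      (fun p : ℤ × (Fin n → ℤ) × (Fin n → ℤ) =>
        (p.1, p.2.1 idx - p.2.2 idx, p.2.2 idx))
      (Omega' q n) (Omega q (q ^ 3 - q) 0 0 (q ^ 3 + q ^ 2)) := by
    refine ⟨?_, ?_, ?_⟩
    · -- MapsTo
      rintro ⟨i, J, K⟩ hp
      obtain ⟨hKeq, hJeq⟩ := hA _ hp
      obtain ⟨h1, h2, h3, h4⟩ := hp
      have hK : ∑ μ, K μ = (q - 1) * K idx := hsum K hKeq
      have hJ : ∑ ν, J ν = (q - 1) * J idx := hsum J hJeq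
      rw [hK, hJ] at h4
      have h3' := h3 idx
      rw [hK] at h3'
      have h2' := h2 idx
      simp only [Omega, Set.mem_setOf_eq]
      refine ⟨h1, by linarith [h2'.1], by linarith [h2'.2], by linarith [h3'.1],
        by linarith [h3'.2], by linarith [h4]⟩
    · -- InjOn
      rintro ⟨i1, J1, K1⟩ h1 ⟨i2, J2, K2⟩ h2 heq
      simp only [Prod.mk.injEq] at heq
      obtain ⟨e1, e2, e3⟩ := heq
      obtain ⟨hK1, hJ1⟩ := hA _ h1
      obtain ⟨hK2, hJ2⟩ := hA _ h2
      have hJ0 : J1 idx = J2 idx := by omega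
      refine Prod.ext e1 (Prod.ext (funext fun ν => ?_) (funext fun μ => ?_))
      · calc J1 ν = J1 idx := hJ1 ν idx
          _ = J2 idx := hJ0
          _ = J2 ν := (hJ2 ν idx).symm
      · calc K1 μ = K1 idx := hK1 μ idx
          _ = K2 idx := e3
          _ = K2 μ := (hK2 μ idx).symm
    · -- SurjOn
      rintro ⟨i, j, k⟩ hmem
      simp only [Omega, Set.mem_setOf_eq] at hmem
      obtain ⟨h1, h2, h3, h4, h5, h6⟩ := hmem
      refine ⟨(i, fun _ => j + k, fun _ => k), ?_, ?_⟩
      · simp only [Omega', Set.mem_setOf_eq]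
        have hsK : ∑ _μ : Fin n, k = (q - 1) * k := hsum _ (fun _ _ => rfl)
        have hsJ : ∑ _ν : Fin n, (j + k) = (q - 1) * (j + k) := hsum _ (fun _ _ => rfl)
        refine ⟨h1, fun μ => ⟨by linarith, by linarith⟩, fun ν => ?_, ?_⟩
        · rw [hsK]
          exact ⟨by linarith, by linarith⟩
        · rw [hsK, hsJ]
          linarith
      · show (i, (j + k) - k, k) = (i, j, k)
        rw [add_sub_cancel_right]
  refine ⟨hA, hB, ?_⟩
  have himg : (Omega' q n).ncard = (Omega q (q ^ 3 - q) 0 0 (q ^ 3 + q ^ 2)).ncard := by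
    rw [← hB.image_eq, Set.ncard_image_of_injOn hB.injOn]
  rw [himg]
  have := ncard_Omega q hq
  linarith
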